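/- arXiv:1003.0857 — 2 statements merged into one kernel-verified Lean document; each statement's English description precedes it below -/
import Mathlib

section
/- Trigonometric Sen identity: for arbitrary nonzero reals λ, m_1, ..., m_N, the function Φ₀(X) = Π_{J<K} sin((X_J−X_K)/2)^{λ m_J m_K} satisfies (ℋ − E₀)Φ₀ = 0 on the region where 0 < (X_J − X_K) < 2π for all J < K, where ℋ = −Σ_J (1/m_J) ∂²/∂X_J² + Σ_{J<K} γ_{JK}/(4 sin²((X_J−X_K)/2)) with γ_{JK} = λ(m_J+m_K)(λ m_J m_K − 1), and E₀ = (λ²/12)·((Σ m_J)³ − Σ m_J³). -/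
open Finset Real

private noncomputable def cc {N : ℕ} (X : Fin N → ℝ) (J K : Fin N) : ℝ :=
  Real.cos ((X J - X K) / 2) / Real.sin ((X J - X K) / 2)

private noncomputable def sq2 {N : ℕ} (X : Fin N → ℝ) (J K : Fin N) : ℝ :=
  Real.sin ((X J - X K) / 2) ^ 2

private noncomputable def Bf {N : ℕ} (m : Fin N → ℝ) (X : Fin N → ℝ) (J : Fin N) : ℝ :=
  ∑ K ∈ Finset.univ.erase J, m K * cc X J K

private noncomputable def SSf {N : ℕ} (m : Fin N → ℝ) (X : Fin N → ℝ) (J : Fin N) : ℝ :=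
  ∑ K ∈ Finset.univ.erase J, m K / sq2 X J K

private noncomputable def Hf {N : ℕ} (m : Fin N → ℝ) (X : Fin N → ℝ) (J K L : Fin N) : ℝ :=
  if K ≠ J then (if L ≠ K ∧ L ≠ J then m J * m K * m L * (cc X J K * cc X J L) else 0) else 0

private lemma cot_triple (u v : ℝ) (hu : Real.sin u ≠ 0) (hv : Real.sin v ≠ 0)
    (huv : Real.sin (u + v) ≠ 0) :
    (Real.cos u / Real.sin u) * (Real.cos (u+v) / Real.sin (u+v))
      + (-(Real.cos u / Real.sin u)) * (Real.cos v / Real.sin v)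
      + (Real.cos (u+v) / Real.sin (u+v)) * (Real.cos v / Real.sin v) = -1 := by
  rw [Real.sin_add, Real.cos_add] at *
  field_simp
  ring

section Trig
variable {N : ℕ} (X : Fin N → ℝ)

private lemma cc_anti (J K : Fin N) : cc X K J = -cc X J K := by
  simp only [cc]
  rw [show (X K - X J)/2 = -((X J - X K)/2) from by ring, Real.cos_neg, Real.sin_neg, div_neg]

private lemma sq2_symm (J K : Fin N) : sq2 X K J = sq2 X J K := by
  simp only [sq2]
  rw [show (X K - X J)/2 = -((X J - X K)/2) from by ring, Real.sin_neg]
  ring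

variable (hspos : ∀ J K : Fin N, J < K → 0 < Real.sin ((X J - X K) / 2))
include hspos

private lemma ssne (J K : Fin N) (h : J ≠ K) : Real.sin ((X J - X K)/2) ≠ 0 := by
  rcases lt_or_gt_of_ne h with hlt | hgt
  · exact (hspos J K hlt).ne'
  · rw [show (X J - X K)/2 = -((X K - X J)/2) from by ring, Real.sin_neg]
    exact neg_ne_zero.mpr (hspos K J hgt).ne'

private lemma sq2_ne (J K : Fin N) (h : J ≠ K) : sq2 X J K ≠ 0 :=
  pow_ne_zero 2 (ssne X hspos J K h)

private lemma cc_sq (J K : Fin N) (h : J ≠ K) : (cc X J K)^2 = 1 / sq2 X J K - 1 := by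
  have hs := ssne X hspos J K h
  simp only [cc, sq2]
  rw [div_pow]
  field_simp
  linear_combination Real.sin_sq_add_cos_sq ((X J - X K)/2)

private lemma cc_triple (a b c : Fin N) (h1 : b ≠ a) (h2 : c ≠ a) (h3 : c ≠ b) :
    cc X a b * cc X a c + cc X b a * cc X b c + cc X c a * cc X c b = -1 := by
  have hu : Real.sin ((X a - X b)/2) ≠ 0 := ssne X hspos a b h1.symm
  have hv : Real.sin ((X b - X c)/2) ≠ 0 := ssne X hspos b c h3.symm
  have hw : Real.sin ((X a - X b)/2 + (X b - X c)/2) ≠ 0 := by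
    rw [show (X a - X b)/2 + (X b - X c)/2 = (X a - X c)/2 from by ring]
    exact ssne X hspos a c h2.symm
  have key := cot_triple ((X a - X b)/2) ((X b - X c)/2) hu hv hw
  rw [show (X a - X b)/2 + (X b - X c)/2 = (X a - X c)/2 from by ring] at key
  rw [cc_anti X a b, cc_anti X a c, cc_anti X b c]
  simp only [cc]
  linear_combination key
end Trig

private lemma sum_Iio_add_sum_Ioi {N : ℕ} (J₀ : Fin N) (f : Fin N → ℝ) :
    ∑ K ∈ Finset.Iio J₀, f K + ∑ K ∈ Finset.Ioi J₀, f K = ∑ K ∈ Finset.univ.erase J₀, f K := by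
  have h1 : Finset.Iio J₀ = (Finset.univ.erase J₀).filter (· < J₀) := by
    ext k
    simp only [Finset.mem_Iio, Finset.mem_filter, Finset.mem_erase, Finset.mem_univ, true_and,
      and_true]
    exact ⟨fun h => ⟨ne_of_lt h, h⟩, fun h => h.2⟩
  have h2 : Finset.Ioi J₀ = (Finset.univ.erase J₀).filter (fun k => ¬ k < J₀) := by
    ext k
    simp only [Finset.mem_Ioi, Finset.mem_filter, Finset.mem_erase, Finset.mem_univ, true_and,
      and_true, not_lt]
    exact ⟨fun h => ⟨ne_of_gt h, le_of_lt h⟩, fun h => lt_of_le_of_ne h.2 (Ne.symm h.1)⟩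
  rw [h1, h2, Finset.sum_filter_add_sum_filter_not]

private lemma pair_sum_support {N : ℕ} (J₀ : Fin N) (F : Fin N → Fin N → ℝ)
    (h0 : ∀ J K, J ≠ J₀ → K ≠ J₀ → F J K = 0) :
    ∑ J : Fin N, ∑ K ∈ Finset.Ioi J, F J K
      = ∑ K ∈ Finset.Ioi J₀, F J₀ K + ∑ J ∈ Finset.Iio J₀, F J J₀ := by
  rw [← Finset.add_sum_erase Finset.univ (fun J => ∑ K ∈ Finset.Ioi J, F J K) (Finset.mem_univ J₀)]
  congr 1
  have h1 : ∀ J ∈ Finset.univ.erase J₀, (∑ K ∈ Finset.Ioi J, F J K)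
      = if J₀ ∈ Finset.Ioi J then F J J₀ else 0 := by
    intro J hJ
    rw [← Finset.sum_ite_eq' (Finset.Ioi J) J₀ (fun K => F J K)]
    refine Finset.sum_congr rfl fun K _ => ?_
    by_cases hK : K = J₀
    · simp [hK]
    · simp [hK, h0 J K (Finset.mem_erase.mp hJ).1 hK]
  rw [Finset.sum_congr rfl h1]
  have h2 : Finset.Iio J₀ = (Finset.univ.erase J₀).filter (fun J => J₀ ∈ Finset.Ioi J) := by
    ext k
    simp only [Finset.mem_Iio, Finset.mem_filter, Finset.mem_erase, Finset.mem_univ, true_and,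
      Finset.mem_Ioi]
    constructor
    · intro h; exact ⟨⟨ne_of_lt h, trivial⟩, h⟩
    · intro h; exact h.2
  rw [h2, Finset.sum_filter]

private lemma offdiag_to_pairs {N : ℕ} (F : Fin N → Fin N → ℝ) :
    ∑ J : Fin N, ∑ K ∈ Finset.univ.erase J, F J K
      = ∑ J : Fin N, ∑ K ∈ Finset.Ioi J, (F J K + F K J) := by
  have h : ∀ J : Fin N, ∑ K ∈ Finset.univ.erase J, F J K
      = ∑ K ∈ Finset.Iio J, F J K + ∑ K ∈ Finset.Ioi J, F J K :=
    fun J => (sum_Iio_add_sum_Ioi J _).symm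
  rw [Finset.sum_congr rfl fun J _ => h J, Finset.sum_add_distrib]
  have h2 : ∑ J : Fin N, ∑ K ∈ Finset.Iio J, F J K
      = ∑ K : Fin N, ∑ J ∈ Finset.Ioi K, F J K := by
    refine Finset.sum_comm' fun J K => ?_
    simp [Finset.mem_Iio, Finset.mem_Ioi]
  rw [h2, ← Finset.sum_add_distrib]
  refine Finset.sum_congr rfl fun J _ => ?_
  rw [← Finset.sum_add_distrib]
  exact Finset.sum_congr rfl fun K _ => add_comm _ _

private lemma sum_swap12 {N : ℕ} (H : Fin N → Fin N → Fin N → ℝ) :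
    ∑ a : Fin N, ∑ b : Fin N, ∑ c : Fin N, H a b c
      = ∑ a : Fin N, ∑ b : Fin N, ∑ c : Fin N, H b a c :=
  Finset.sum_comm

private lemma sum_swap23 {N : ℕ} (H : Fin N → Fin N → Fin N → ℝ) :
    ∑ a : Fin N, ∑ b : Fin N, ∑ c : Fin N, H a b c
      = ∑ a : Fin N, ∑ b : Fin N, ∑ c : Fin N, H a c b :=
  Finset.sum_congr rfl fun _ _ => Finset.sum_comm

private lemma triple_sum_cyc {N : ℕ} (H : Fin N → Fin N → Fin N → ℝ) :
    ∑ a : Fin N, ∑ b : Fin N, ∑ c : Fin N, H a b c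
      = ∑ a : Fin N, ∑ b : Fin N, ∑ c : Fin N, H c a b :=
  calc ∑ a : Fin N, ∑ b : Fin N, ∑ c : Fin N, H a b c
      = ∑ a : Fin N, ∑ b : Fin N, ∑ c : Fin N, H b a c := sum_swap12 H
    _ = ∑ a : Fin N, ∑ b : Fin N, ∑ c : Fin N, H c a b :=
        sum_swap23 (fun a b c => H b a c)

private lemma ite_double_erase {N : ℕ} (J₀ : Fin N) (g : Fin N → Fin N → ℝ) :
    (∑ K : Fin N, ∑ L : Fin N, if K ≠ J₀ then (if L ≠ K ∧ L ≠ J₀ then g K L else 0) else 0)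
      = ∑ K ∈ Finset.univ.erase J₀, ∑ L ∈ (Finset.univ.erase J₀).erase K, g K L := by
  have h1 : ∀ K : Fin N, (Finset.univ.erase J₀).erase K
      = Finset.univ.filter (fun L => L ≠ K ∧ L ≠ J₀) := by
    intro K; ext L
    simp only [Finset.mem_erase, Finset.mem_filter, Finset.mem_univ, and_true, true_and]
  calc (∑ K : Fin N, ∑ L : Fin N, if K ≠ J₀ then (if L ≠ K ∧ L ≠ J₀ then g K L else 0) else 0)
      = ∑ K : Fin N, (if K ≠ J₀ then ∑ L : Fin N, (if L ≠ K ∧ L ≠ J₀ then g K L else 0) else 0) := by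
        refine Finset.sum_congr rfl fun K _ => ?_
        by_cases h : K ≠ J₀ <;> simp [h]
    _ = ∑ K ∈ Finset.univ.filter (fun K => K ≠ J₀), ∑ L : Fin N,
          (if L ≠ K ∧ L ≠ J₀ then g K L else 0) := (Finset.sum_filter _ _).symm
    _ = ∑ K ∈ Finset.univ.erase J₀, ∑ L : Fin N, (if L ≠ K ∧ L ≠ J₀ then g K L else 0) := by
        rw [Finset.filter_ne']
    _ = ∑ K ∈ Finset.univ.erase J₀, ∑ L ∈ (Finset.univ.erase J₀).erase K, g K L := by
        refine Finset.sum_congr rfl fun K _ => ?_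
        rw [h1 K, Finset.sum_filter]

private lemma M3_eval {N : ℕ} (m : Fin N → ℝ) :
    (∑ J : Fin N, ∑ K : Fin N, ∑ L : Fin N,
        if K ≠ J then (if L ≠ K ∧ L ≠ J then m J * m K * m L else 0) else 0)
      = (∑ i : Fin N, m i)^3 - 3*(∑ i : Fin N, m i)*(∑ i : Fin N, (m i)^2)
        + 2*(∑ i : Fin N, (m i)^3) := by
  have e : ∀ J : Fin N, (∑ K : Fin N, ∑ L : Fin N,
      if K ≠ J then (if L ≠ K ∧ L ≠ J then m J * m K * m L else 0) else 0)
      = ∑ K ∈ Finset.univ.erase J, ∑ L ∈ (Finset.univ.erase J).erase K, m J * m K * m L :=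
    fun J => ite_double_erase J _
  rw [Finset.sum_congr rfl fun J _ => e J]
  have e2 : ∀ J : Fin N, (∑ K ∈ Finset.univ.erase J, ∑ L ∈ (Finset.univ.erase J).erase K,
      m J * m K * m L)
      = m J * (((∑ i : Fin N, m i) - m J)^2 - ((∑ i : Fin N, (m i)^2) - (m J)^2)) := by
    intro J
    have h1 : ∀ K ∈ Finset.univ.erase J, (∑ L ∈ (Finset.univ.erase J).erase K, m J * m K * m L)
        = m J * m K * ((∑ i : Fin N, m i) - m J - m K) := by
      intro K hK
      rw [← Finset.mul_sum, Finset.sum_erase_eq_sub hK,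
        Finset.sum_erase_eq_sub (Finset.mem_univ J)]
    rw [Finset.sum_congr rfl h1]
    have h2 : ∀ K : Fin N, m J * m K * ((∑ i : Fin N, m i) - m J - m K)
        = (m J * ((∑ i : Fin N, m i) - m J)) * m K - m J * (m K)^2 := fun K => by ring
    rw [Finset.sum_congr rfl fun K _ => h2 K, Finset.sum_sub_distrib, ← Finset.mul_sum,
      ← Finset.mul_sum, Finset.sum_erase_eq_sub (Finset.mem_univ J),
      Finset.sum_erase_eq_sub (Finset.mem_univ J)]
    ring
  rw [Finset.sum_congr rfl fun J _ => e2 J]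
  have h3 : ∀ J : Fin N, m J * (((∑ i : Fin N, m i) - m J)^2 - ((∑ i : Fin N, (m i)^2) - (m J)^2))
      = ((∑ i : Fin N, m i)^2 - (∑ i : Fin N, (m i)^2)) * m J - (2*(∑ i : Fin N, m i)) * (m J)^2
        + 2 * (m J)^3 := fun J => by ring
  rw [Finset.sum_congr rfl fun J _ => h3 J]
  rw [Finset.sum_add_distrib, Finset.sum_sub_distrib, ← Finset.mul_sum, ← Finset.mul_sum,
    ← Finset.mul_sum]
  ring

private lemma Hf_total {N : ℕ} (m : Fin N → ℝ) (X : Fin N → ℝ)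
    (htr : ∀ a b c : Fin N, b ≠ a → c ≠ a → c ≠ b →
      cc X a b * cc X a c + cc X b a * cc X b c + cc X c a * cc X c b = -1) :
    3 * (∑ J : Fin N, ∑ K : Fin N, ∑ L : Fin N, Hf m X J K L)
      = -(∑ J : Fin N, ∑ K : Fin N, ∑ L : Fin N,
          if K ≠ J then (if L ≠ K ∧ L ≠ J then m J * m K * m L else 0) else 0) := by
  have hHsum : ∀ a b c : Fin N, Hf m X a b c + Hf m X b a c + Hf m X c a b
      = -(if b ≠ a then (if c ≠ b ∧ c ≠ a then m a * m b * m c else 0) else 0) := by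
    intro a b c
    by_cases h1 : b = a
    · simp [Hf, h1]
    · by_cases h2 : c = a
      · simp [Hf, h1, h2]
      · by_cases h3 : c = b
        · simp [Hf, h1, h2, h3]
        · have h1' : ¬ a = b := fun h => h1 h.symm
          have h2' : ¬ a = c := fun h => h2 h.symm
          have h3' : ¬ b = c := fun h => h3 h.symm
          simp only [Hf, ne_eq, h1, h2, h3, h1', h2', h3', not_false_eq_true, and_self,
            if_true, and_true, true_and]
          linear_combination (m a * m b * m c) * htr a b c h1 h2 h3
  have c1 : (∑ J : Fin N, ∑ K : Fin N, ∑ L : Fin N, Hf m X J K L)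
      = ∑ J : Fin N, ∑ K : Fin N, ∑ L : Fin N, Hf m X K J L := sum_swap12 (Hf m X)
  have c2 : (∑ J : Fin N, ∑ K : Fin N, ∑ L : Fin N, Hf m X J K L)
      = ∑ J : Fin N, ∑ K : Fin N, ∑ L : Fin N, Hf m X L J K := triple_sum_cyc (Hf m X)
  calc 3 * (∑ J : Fin N, ∑ K : Fin N, ∑ L : Fin N, Hf m X J K L)
      = (∑ J : Fin N, ∑ K : Fin N, ∑ L : Fin N, Hf m X J K L)
        + ((∑ J : Fin N, ∑ K : Fin N, ∑ L : Fin N, Hf m X K J L)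
        + (∑ J : Fin N, ∑ K : Fin N, ∑ L : Fin N, Hf m X L J K)) := by
          rw [← c1, ← c2]; ring
    _ = ∑ J : Fin N, ∑ K : Fin N, ∑ L : Fin N,
          (Hf m X J K L + (Hf m X K J L + Hf m X L J K)) := by
          simp only [← Finset.sum_add_distrib]
    _ = ∑ J : Fin N, ∑ K : Fin N, ∑ L : Fin N,
          -(if K ≠ J then (if L ≠ K ∧ L ≠ J then m J * m K * m L else 0) else 0) := by
          refine Finset.sum_congr rfl fun a _ => Finset.sum_congr rfl fun b _ =>
            Finset.sum_congr rfl fun c _ => ?_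
          rw [← add_assoc]
          exact hHsum a b c
    _ = -(∑ J : Fin N, ∑ K : Fin N, ∑ L : Fin N,
          if K ≠ J then (if L ≠ K ∧ L ≠ J then m J * m K * m L else 0) else 0) := by
          simp only [Finset.sum_neg_distrib]

private lemma second_deriv_prod_rpow {N : ℕ} (X : Fin N → ℝ) (a : Fin N → Fin N → ℝ) (J₀ : Fin N)
    (hX : ∀ J K : Fin N, J < K → 0 < Real.sin ((X J - X K) / 2)) :
    iteratedDeriv 2 (fun t => ∏ J : Fin N, ∏ K ∈ Finset.Ioi J,
        Real.sin ((Function.update X J₀ t J - Function.update X J₀ t K) / 2) ^ (a J K)) (X J₀)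
    = (∏ J : Fin N, ∏ K ∈ Finset.Ioi J, Real.sin ((X J - X K) / 2) ^ (a J K)) *
      ((∑ J : Fin N, ∑ K ∈ Finset.Ioi J, a J K * ((Real.cos ((X J - X K) / 2) *
          (if J = J₀ then (1:ℝ)/2 else if K = J₀ then -(1:ℝ)/2 else 0)) / Real.sin ((X J - X K) / 2))) ^ 2
       + ∑ J : Fin N, ∑ K ∈ Finset.Ioi J,
          -(a J K * (if J = J₀ then (1:ℝ)/2 else if K = J₀ then -(1:ℝ)/2 else 0) ^ 2
            / Real.sin ((X J - X K) / 2) ^ 2)) := by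
  set x₀ := X J₀ with hx₀
  set ξ : Fin N → ℝ → ℝ := fun J t => if J = J₀ then t else X J with hξ
  set θ : Fin N → Fin N → ℝ → ℝ := fun J K t => (ξ J t - ξ K t) / 2 with hθ
  set dd : Fin N → Fin N → ℝ := fun J K =>
    if J = J₀ then (1:ℝ)/2 else if K = J₀ then -(1:ℝ)/2 else 0 with hdd
  -- rewrite the function in ξ form
  have hfun : (fun t => ∏ J : Fin N, ∏ K ∈ Finset.Ioi J,
      Real.sin ((Function.update X J₀ t J - Function.update X J₀ t K) / 2) ^ (a J K))
      = fun t => ∏ J : Fin N, ∏ K ∈ Finset.Ioi J, Real.sin (θ J K t) ^ (a J K) := by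
    funext t
    refine Finset.prod_congr rfl fun J _ => Finset.prod_congr rfl fun K _ => ?_
    simp [hθ, hξ, Function.update_apply]
  have hθ₀ : ∀ J K : Fin N, θ J K x₀ = (X J - X K) / 2 := by
    intro J K
    by_cases hJ : J = J₀ <;> by_cases hK : K = J₀ <;> simp [hθ, hξ, hJ, hK, hx₀]
  have hcξ : ∀ J : Fin N, Continuous (ξ J) := by
    intro J
    by_cases h : J = J₀
    · simpa [hξ, h] using continuous_id'
    · simpa [hξ, h] using continuous_const
  have hcont : ∀ J K : Fin N, Continuous fun t => Real.sin (θ J K t) := by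
    intro J K
    exact Real.continuous_sin.comp (((hcξ J).sub (hcξ K)).div_const 2)
  set U₀ : Set ℝ := {t | ∀ J K : Fin N, J < K → 0 < Real.sin (θ J K t)} with hU₀
  have hopen : IsOpen U₀ := by
    have he : U₀ = ⋂ J : Fin N, ⋂ K : Fin N, {t | J < K → 0 < Real.sin (θ J K t)} := by
      ext t; simp [hU₀, Set.mem_iInter, Set.mem_setOf_eq]
    rw [he]
    refine isOpen_iInter_of_finite fun J => isOpen_iInter_of_finite fun K => ?_
    by_cases h : J < K
    · simp only [h, true_implies]
      exact (hcont J K).isOpen_preimage (Set.Ioi 0) isOpen_Ioi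
    · simp only [h, false_implies]
      exact isOpen_univ
  have hmem : x₀ ∈ U₀ := by
    intro J K hJK
    rw [hθ₀]
    exact hX J K hJK
  have hne : ∀ t ∈ U₀, ∀ J K : Fin N, J < K → Real.sin (θ J K t) ≠ 0 :=
    fun t ht J K h => ne_of_gt (ht J K h)
  set W : ℝ → ℝ := fun t => ∑ J : Fin N, ∑ K ∈ Finset.Ioi J,
    a J K * Real.log (Real.sin (θ J K t)) with hW
  have hfg : ∀ t ∈ U₀, (∏ J : Fin N, ∏ K ∈ Finset.Ioi J, Real.sin (θ J K t) ^ (a J K))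
      = Real.exp (W t) := by
    intro t ht
    rw [hW, Real.exp_sum]
    refine Finset.prod_congr rfl fun J _ => ?_
    rw [Real.exp_sum]
    refine Finset.prod_congr rfl fun K hK => ?_
    rw [Real.rpow_def_of_pos (ht J K (Finset.mem_Ioi.mp hK)), mul_comm]
  have hasθ : ∀ J K : Fin N, J ≠ K → ∀ t : ℝ, HasDerivAt (fun t => θ J K t) (dd J K) t := by
    intro J K hJK t
    by_cases hJ : J = J₀
    · have hK : K ≠ J₀ := fun h => hJK (h ▸ hJ)
      have h1 : HasDerivAt (fun t : ℝ => (t - X K) / 2) ((1:ℝ)/2) t := by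
        simpa using ((hasDerivAt_id t).sub_const (X K)).div_const 2
      have he : (fun t : ℝ => θ J K t) = fun t : ℝ => (t - X K) / 2 := by
        funext s; simp [hθ, hξ, hJ, hK]
      rw [he]; simpa [hdd, hJ, hK] using h1
    · by_cases hK : K = J₀
      · have h1 : HasDerivAt (fun t : ℝ => (X J - t) / 2) (-(1:ℝ)/2) t := by
          have := ((hasDerivAt_id t).const_sub (X J)).div_const 2
          simpa using this
        have he : (fun t : ℝ => θ J K t) = fun t : ℝ => (X J - t) / 2 := by
          funext s; simp [hθ, hξ, hJ, hK]
        rw [he]; simpa [hdd, hJ, hK] using h1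
      · have he : (fun t : ℝ => θ J K t) = fun _ : ℝ => (X J - X K) / 2 := by
          funext s; simp [hθ, hξ, hJ, hK]
        rw [he]; simpa [hdd, hJ, hK] using hasDerivAt_const t ((X J - X K) / 2)
  set L : ℝ → ℝ := fun t => ∑ J : Fin N, ∑ K ∈ Finset.Ioi J,
    a J K * ((Real.cos (θ J K t) * dd J K) / Real.sin (θ J K t)) with hLdef
  have hWd : ∀ t ∈ U₀, HasDerivAt W (L t) t := by
    intro t ht
    rw [hW, hLdef]
    apply HasDerivAt.fun_sum
    intro J _
    apply HasDerivAt.fun_sum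
    intro K hK
    have hJK := Finset.mem_Ioi.mp hK
    have h1 : HasDerivAt (fun t => Real.sin (θ J K t)) (Real.cos (θ J K t) * dd J K) t :=
      (hasθ J K (ne_of_lt hJK) t).sin
    exact (h1.log (hne t ht J K hJK)).const_mul (a J K)
  set Ep : ℝ := ∑ J : Fin N, ∑ K ∈ Finset.Ioi J,
    -(a J K * (dd J K) ^ 2 / Real.sin ((X J - X K) / 2) ^ 2) with hEp
  have hLd : HasDerivAt L Ep x₀ := by
    rw [hLdef, hEp]
    apply HasDerivAt.fun_sum
    intro J _
    apply HasDerivAt.fun_sum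
    intro K hK
    have hJK := Finset.mem_Ioi.mp hK
    have hsne : Real.sin (θ J K x₀) ≠ 0 := hne x₀ hmem J K hJK
    have hnum : HasDerivAt (fun t => Real.cos (θ J K t) * dd J K)
        (-Real.sin (θ J K x₀) * dd J K * dd J K) x₀ :=
      ((hasθ J K (ne_of_lt hJK) x₀).cos).mul_const (dd J K)
    have hden : HasDerivAt (fun t => Real.sin (θ J K t)) (Real.cos (θ J K x₀) * dd J K) x₀ :=
      (hasθ J K (ne_of_lt hJK) x₀).sin
    have hdiv := (hnum.fun_div hden hsne).const_mul (a J K)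
    convert hdiv using 1
    · rfl
    rw [hθ₀ J K] at hsne ⊢
    have hpy := Real.sin_sq_add_cos_sq ((X J - X K) / 2)
    have hnum2 : (-Real.sin ((X J - X K) / 2) * dd J K * dd J K * Real.sin ((X J - X K) / 2)
        - Real.cos ((X J - X K) / 2) * dd J K * (Real.cos ((X J - X K) / 2) * dd J K))
        = -(dd J K) ^ 2 := by linear_combination (-(dd J K)^2) * hpy
    rw [hnum2]
    field_simp
  -- eventual equalities
  have hfe : (fun t => ∏ J : Fin N, ∏ K ∈ Finset.Ioi J, Real.sin (θ J K t) ^ (a J K))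
      =ᶠ[nhds x₀] fun t => Real.exp (W t) := by
    filter_upwards [hopen.mem_nhds hmem] with t ht using hfg t ht
  have hd2 : deriv (fun t => Real.exp (W t)) =ᶠ[nhds x₀] fun t => Real.exp (W t) * L t := by
    filter_upwards [hopen.mem_nhds hmem] with t ht
    exact ((hWd t ht).exp).deriv
  have hd : deriv (fun t => ∏ J : Fin N, ∏ K ∈ Finset.Ioi J, Real.sin (θ J K t) ^ (a J K))
      =ᶠ[nhds x₀] fun t => Real.exp (W t) * L t := hfe.deriv.trans hd2
  have hfinal : iteratedDeriv 2 (fun t => ∏ J : Fin N, ∏ K ∈ Finset.Ioi J,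
      Real.sin (θ J K t) ^ (a J K)) x₀
      = Real.exp (W x₀) * L x₀ * L x₀ + Real.exp (W x₀) * Ep := by
    rw [show (2:ℕ) = 1 + 1 from rfl, iteratedDeriv_succ, iteratedDeriv_one]
    rw [hd.deriv_eq]
    exact (((hWd x₀ hmem).exp).mul hLd).deriv
  rw [hfun, hfinal, ← hfg x₀ hmem]
  have hprod : (∏ J : Fin N, ∏ K ∈ Finset.Ioi J, Real.sin (θ J K x₀) ^ (a J K))
      = ∏ J : Fin N, ∏ K ∈ Finset.Ioi J, Real.sin ((X J - X K) / 2) ^ (a J K) := by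
    refine Finset.prod_congr rfl fun J _ => Finset.prod_congr rfl fun K _ => by rw [hθ₀]
  have hLx : L x₀ = ∑ J : Fin N, ∑ K ∈ Finset.Ioi J, a J K * ((Real.cos ((X J - X K) / 2) *
      (if J = J₀ then (1:ℝ)/2 else if K = J₀ then -(1:ℝ)/2 else 0)) / Real.sin ((X J - X K) / 2)) := by
    rw [hLdef]
    exact Finset.sum_congr rfl fun J _ => Finset.sum_congr rfl fun K _ => by rw [hθ₀, hdd]
  rw [hprod, hLx, hEp, hdd]
  ring

open Finset Real in
theorem sen_identity_trigonometric (N : ℕ) (hN : 2 ≤ N) (lam : ℝ) (hlam : lam ≠ 0)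
    (m : Fin N → ℝ) (hm : ∀ J, m J ≠ 0)
    (Φ₀ : (Fin N → ℝ) → ℝ)
    (hΦ₀ : Φ₀ = fun X => ∏ J : Fin N, ∏ K ∈ Finset.Ioi J,
        Real.sin ((X J - X K) / 2) ^ (lam * m J * m K))
    (γ : Fin N → Fin N → ℝ)
    (hγ : γ = fun J K => lam * (m J + m K) * (lam * m J * m K - 1))
    (V : ℝ → ℝ) (hV : V = fun r => 1 / (4 * Real.sin (r / 2) ^ 2))
    (E₀ : ℝ) (hE₀ : E₀ = lam ^ 2 / 12 * ((∑ J : Fin N, m J) ^ 3 - ∑ J : Fin N, (m J) ^ 3))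
    (X : Fin N → ℝ)
    (hX : ∀ J K : Fin N, J < K → 0 < X J - X K ∧ X J - X K < 2 * Real.pi) :
    -∑ J : Fin N, (1 / m J) * iteratedDeriv 2 (fun t => Φ₀ (Function.update X J t)) (X J)
      + (∑ J : Fin N, ∑ K ∈ Finset.Ioi J, γ J K * V (X J - X K)) * Φ₀ X
      = E₀ * Φ₀ X := by
  subst hΦ₀ hγ hV hE₀
  beta_reduce
  have hspos : ∀ J K : Fin N, J < K → 0 < Real.sin ((X J - X K) / 2) := by
    intro J K h
    have h1 := (hX J K h).1
    have h2 := (hX J K h).2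
    apply Real.sin_pos_of_pos_of_lt_pi
    · linarith
    · linarith
  have hkey : ∀ J₀ : Fin N,
      iteratedDeriv 2 (fun t => ∏ J : Fin N, ∏ K ∈ Finset.Ioi J,
        Real.sin ((Function.update X J₀ t J - Function.update X J₀ t K) / 2)
          ^ (lam * m J * m K)) (X J₀)
      = (∏ J : Fin N, ∏ K ∈ Finset.Ioi J, Real.sin ((X J - X K) / 2) ^ (lam * m J * m K)) *
        ((∑ J : Fin N, ∑ K ∈ Finset.Ioi J, lam * m J * m K * ((Real.cos ((X J - X K) / 2) *
            (if J = J₀ then (1:ℝ)/2 else if K = J₀ then -(1:ℝ)/2 else 0))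
              / Real.sin ((X J - X K) / 2))) ^ 2
         + ∑ J : Fin N, ∑ K ∈ Finset.Ioi J,
            -(lam * m J * m K * (if J = J₀ then (1:ℝ)/2 else if K = J₀ then -(1:ℝ)/2 else 0) ^ 2
              / Real.sin ((X J - X K) / 2) ^ 2)) :=
    fun J₀ => second_deriv_prod_rpow X (fun J K => lam * m J * m K) J₀ hspos
  simp only [hkey]
  have hΛ : ∀ J₀ : Fin N, (∑ J : Fin N, ∑ K ∈ Finset.Ioi J, lam * m J * m K *
      ((Real.cos ((X J - X K) / 2) *
        (if J = J₀ then (1:ℝ)/2 else if K = J₀ then -(1:ℝ)/2 else 0))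
          / Real.sin ((X J - X K) / 2)))
      = lam * m J₀ / 2 * Bf m X J₀ := by
    intro J₀
    have hz : ∀ J K : Fin N, J ≠ J₀ → K ≠ J₀ → lam * m J * m K *
        ((Real.cos ((X J - X K) / 2) *
          (if J = J₀ then (1:ℝ)/2 else if K = J₀ then -(1:ℝ)/2 else 0))
            / Real.sin ((X J - X K) / 2)) = 0 := by
      intro J K hJ hK
      rw [if_neg hJ, if_neg hK]
      ring
    have step : (∑ J : Fin N, ∑ K ∈ Finset.Ioi J, lam * m J * m K *
        ((Real.cos ((X J - X K) / 2) *
          (if J = J₀ then (1:ℝ)/2 else if K = J₀ then -(1:ℝ)/2 else 0))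
            / Real.sin ((X J - X K) / 2)))
        = (∑ K ∈ Finset.Ioi J₀, lam * m J₀ * m K * ((Real.cos ((X J₀ - X K) / 2) *
            (if J₀ = J₀ then (1:ℝ)/2 else if K = J₀ then -(1:ℝ)/2 else 0))
              / Real.sin ((X J₀ - X K) / 2)))
          + ∑ J ∈ Finset.Iio J₀, lam * m J * m J₀ * ((Real.cos ((X J - X J₀) / 2) *
            (if J = J₀ then (1:ℝ)/2 else if J₀ = J₀ then -(1:ℝ)/2 else 0))
              / Real.sin ((X J - X J₀) / 2)) := pair_sum_support J₀ _ hz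
    rw [step]
    have t1 : ∀ K ∈ Finset.Ioi J₀, lam * m J₀ * m K * ((Real.cos ((X J₀ - X K) / 2) *
        (if J₀ = J₀ then (1:ℝ)/2 else if K = J₀ then -(1:ℝ)/2 else 0))
          / Real.sin ((X J₀ - X K) / 2))
        = lam * m J₀ / 2 * (m K * cc X J₀ K) := by
      intro K _
      rw [if_pos rfl]
      simp only [cc]
      ring
    have t2 : ∀ J ∈ Finset.Iio J₀, lam * m J * m J₀ * ((Real.cos ((X J - X J₀) / 2) *
        (if J = J₀ then (1:ℝ)/2 else if J₀ = J₀ then -(1:ℝ)/2 else 0))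
          / Real.sin ((X J - X J₀) / 2))
        = lam * m J₀ / 2 * (m J * cc X J₀ J) := by
      intro J hJ
      rw [if_neg (ne_of_lt (Finset.mem_Iio.mp hJ)), if_pos rfl]
      simp only [cc]
      rw [show (X J - X J₀)/2 = -((X J₀ - X J)/2) from by ring, Real.cos_neg, Real.sin_neg,
        div_neg]
      ring
    rw [Finset.sum_congr rfl t1, Finset.sum_congr rfl t2, ← Finset.mul_sum, ← Finset.mul_sum,
      ← mul_add]
    have comb : (∑ K ∈ Finset.Ioi J₀, m K * cc X J₀ K) + ∑ J ∈ Finset.Iio J₀, m J * cc X J₀ J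
        = Bf m X J₀ := by
      rw [add_comm]
      exact sum_Iio_add_sum_Ioi J₀ _
    rw [comb]
  have hP : ∀ J₀ : Fin N, (∑ J : Fin N, ∑ K ∈ Finset.Ioi J,
      -(lam * m J * m K * (if J = J₀ then (1:ℝ)/2 else if K = J₀ then -(1:ℝ)/2 else 0) ^ 2
        / Real.sin ((X J - X K) / 2) ^ 2))
      = -(lam * m J₀ / 4) * SSf m X J₀ := by
    intro J₀
    have hz : ∀ J K : Fin N, J ≠ J₀ → K ≠ J₀ →
        -(lam * m J * m K * (if J = J₀ then (1:ℝ)/2 else if K = J₀ then -(1:ℝ)/2 else 0) ^ 2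
          / Real.sin ((X J - X K) / 2) ^ 2) = 0 := by
      intro J K hJ hK
      rw [if_neg hJ, if_neg hK]
      ring
    have step : (∑ J : Fin N, ∑ K ∈ Finset.Ioi J,
        -(lam * m J * m K * (if J = J₀ then (1:ℝ)/2 else if K = J₀ then -(1:ℝ)/2 else 0) ^ 2
          / Real.sin ((X J - X K) / 2) ^ 2))
        = (∑ K ∈ Finset.Ioi J₀,
            -(lam * m J₀ * m K * (if J₀ = J₀ then (1:ℝ)/2 else if K = J₀ then -(1:ℝ)/2 else 0) ^ 2
              / Real.sin ((X J₀ - X K) / 2) ^ 2))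
          + ∑ J ∈ Finset.Iio J₀,
            -(lam * m J * m J₀ * (if J = J₀ then (1:ℝ)/2 else if J₀ = J₀ then -(1:ℝ)/2 else 0) ^ 2
              / Real.sin ((X J - X J₀) / 2) ^ 2) := pair_sum_support J₀ _ hz
    rw [step]
    have t1 : ∀ K ∈ Finset.Ioi J₀,
        -(lam * m J₀ * m K * (if J₀ = J₀ then (1:ℝ)/2 else if K = J₀ then -(1:ℝ)/2 else 0) ^ 2
          / Real.sin ((X J₀ - X K) / 2) ^ 2)
        = -(lam * m J₀ / 4) * (m K / sq2 X J₀ K) := by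
      intro K _
      rw [if_pos rfl]
      simp only [sq2]
      ring
    have t2 : ∀ J ∈ Finset.Iio J₀,
        -(lam * m J * m J₀ * (if J = J₀ then (1:ℝ)/2 else if J₀ = J₀ then -(1:ℝ)/2 else 0) ^ 2
          / Real.sin ((X J - X J₀) / 2) ^ 2)
        = -(lam * m J₀ / 4) * (m J / sq2 X J₀ J) := by
      intro J hJ
      rw [if_neg (ne_of_lt (Finset.mem_Iio.mp hJ)), if_pos rfl,
        show Real.sin ((X J - X J₀) / 2) ^ 2 = sq2 X J₀ J from sq2_symm X J₀ J]
      simp only [sq2]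
      ring
    rw [Finset.sum_congr rfl t1, Finset.sum_congr rfl t2, ← Finset.mul_sum, ← Finset.mul_sum,
      ← mul_add]
    have comb : (∑ K ∈ Finset.Ioi J₀, m K / sq2 X J₀ K) + ∑ J ∈ Finset.Iio J₀, m J / sq2 X J₀ J
        = SSf m X J₀ := by
      rw [add_comm]
      exact sum_Iio_add_sum_Ioi J₀ _
    rw [comb]
  have hpot : ∀ J K : Fin N, (1:ℝ) / (4 * Real.sin ((X J - X K) / 2) ^ 2)
      = 1 / (4 * sq2 X J K) := fun J K => rfl
  simp only [hΛ, hP, hpot]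
  have hpull : (∑ J : Fin N, 1 / m J *
      ((∏ J : Fin N, ∏ K ∈ Finset.Ioi J, Real.sin ((X J - X K) / 2) ^ (lam * m J * m K)) *
        ((lam * m J / 2 * Bf m X J) ^ 2 + -(lam * m J / 4) * SSf m X J)))
      = (∑ J : Fin N, (lam ^ 2 * m J / 4 * Bf m X J ^ 2 - lam / 4 * SSf m X J)) *
        (∏ J : Fin N, ∏ K ∈ Finset.Ioi J, Real.sin ((X J - X K) / 2) ^ (lam * m J * m K)) := by
    rw [Finset.sum_mul]
    refine Finset.sum_congr rfl fun J _ => ?_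
    field_simp [hm J]
    ring
  rw [hpull]
  have hcanc : -(lam ^ 2 / 4) *
        (∑ J : Fin N, ∑ K ∈ Finset.univ.erase J, m J * m K ^ 2 / sq2 X J K)
      + lam / 4 * (∑ J : Fin N, SSf m X J)
      + (∑ J : Fin N, ∑ K ∈ Finset.Ioi J,
          lam * (m J + m K) * (lam * m J * m K - 1) * (1 / (4 * sq2 X J K))) = 0 := by
    have hoff1 : (∑ J : Fin N, ∑ K ∈ Finset.univ.erase J, m J * m K ^ 2 / sq2 X J K)
        = ∑ J : Fin N, ∑ K ∈ Finset.Ioi J,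
            (m J * m K ^ 2 / sq2 X J K + m K * m J ^ 2 / sq2 X K J) :=
      offdiag_to_pairs _
    have hoff2 : (∑ J : Fin N, SSf m X J)
        = ∑ J : Fin N, ∑ K ∈ Finset.Ioi J, (m K / sq2 X J K + m J / sq2 X K J) :=
      offdiag_to_pairs _
    rw [hoff1, hoff2]
    simp only [Finset.mul_sum]
    rw [← Finset.sum_add_distrib, ← Finset.sum_add_distrib]
    refine Finset.sum_eq_zero fun J _ => ?_
    rw [← Finset.sum_add_distrib, ← Finset.sum_add_distrib]
    refine Finset.sum_eq_zero fun K hK => ?_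
    have hne : J ≠ K := ne_of_lt (Finset.mem_Ioi.mp hK)
    rw [sq2_symm X J K]
    have hs : sq2 X J K ≠ 0 := sq2_ne X hspos J K hne
    field_simp
    ring
  have hT3 := Hf_total m X (fun a b c h1 h2 h3 => cc_triple X hspos a b c h1 h2 h3)
  have hM3 := M3_eval m
  have hB2 : ∀ J₀ : Fin N, m J₀ * Bf m X J₀ ^ 2
      = ((∑ K ∈ Finset.univ.erase J₀, m J₀ * m K ^ 2 / sq2 X J₀ K)
          - m J₀ * ((∑ i : Fin N, m i ^ 2) - m J₀ ^ 2))
        + ∑ K : Fin N, ∑ L : Fin N, Hf m X J₀ K L := by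
    intro J₀
    have e0 : Bf m X J₀ ^ 2 = ∑ K ∈ Finset.univ.erase J₀, ∑ L ∈ Finset.univ.erase J₀,
        (m K * cc X J₀ K) * (m L * cc X J₀ L) := by
      rw [show Bf m X J₀ = ∑ K ∈ Finset.univ.erase J₀, m K * cc X J₀ K from rfl, sq,
        Finset.sum_mul_sum]
    have e1 : ∀ K ∈ Finset.univ.erase J₀,
        (∑ L ∈ Finset.univ.erase J₀, (m K * cc X J₀ K) * (m L * cc X J₀ L))
        = (m K * cc X J₀ K) * (m K * cc X J₀ K)
          + ∑ L ∈ (Finset.univ.erase J₀).erase K, (m K * cc X J₀ K) * (m L * cc X J₀ L) :=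
      fun K hK => (Finset.add_sum_erase _ _ hK).symm
    calc m J₀ * Bf m X J₀ ^ 2
        = ∑ K ∈ Finset.univ.erase J₀, (m J₀ * ((m K * cc X J₀ K) * (m K * cc X J₀ K))
            + ∑ L ∈ (Finset.univ.erase J₀).erase K,
                m J₀ * ((m K * cc X J₀ K) * (m L * cc X J₀ L))) := by
          rw [e0, Finset.mul_sum]
          refine Finset.sum_congr rfl fun K hK => ?_
          rw [e1 K hK, mul_add, Finset.mul_sum]
      _ = (∑ K ∈ Finset.univ.erase J₀, (m J₀ * m K ^ 2 / sq2 X J₀ K - m J₀ * m K ^ 2))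
          + ∑ K ∈ Finset.univ.erase J₀, ∑ L ∈ (Finset.univ.erase J₀).erase K,
              m J₀ * m K * m L * (cc X J₀ K * cc X J₀ L) := by
          rw [Finset.sum_add_distrib]
          congr 1
          · refine Finset.sum_congr rfl fun K hK => ?_
            have hKne : J₀ ≠ K := fun h => (Finset.mem_erase.mp hK).1 h.symm
            rw [show m J₀ * ((m K * cc X J₀ K) * (m K * cc X J₀ K))
                = m J₀ * m K ^ 2 * cc X J₀ K ^ 2 from by ring,
              cc_sq X hspos J₀ K hKne]
            ring
          · exact Finset.sum_congr rfl fun K _ => Finset.sum_congr rfl fun L _ => by ring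
      _ = ((∑ K ∈ Finset.univ.erase J₀, m J₀ * m K ^ 2 / sq2 X J₀ K)
            - m J₀ * ((∑ i : Fin N, m i ^ 2) - m J₀ ^ 2))
          + ∑ K : Fin N, ∑ L : Fin N, Hf m X J₀ K L := by
          congr 1
          · rw [Finset.sum_sub_distrib]
            congr 1
            rw [← Finset.mul_sum, Finset.sum_erase_eq_sub (Finset.mem_univ J₀)]
          · rw [show (∑ K : Fin N, ∑ L : Fin N, Hf m X J₀ K L)
                = ∑ K : Fin N, ∑ L : Fin N, (if K ≠ J₀ then (if L ≠ K ∧ L ≠ J₀ then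
                    m J₀ * m K * m L * (cc X J₀ K * cc X J₀ L) else 0) else 0) from rfl,
              ite_double_erase]
  have hsplit : (∑ J : Fin N, (lam ^ 2 * m J / 4 * Bf m X J ^ 2 - lam / 4 * SSf m X J))
      = lam ^ 2 / 4 * (∑ J : Fin N, m J * Bf m X J ^ 2)
        - lam / 4 * (∑ J : Fin N, SSf m X J) := by
    rw [Finset.sum_sub_distrib, Finset.mul_sum, Finset.mul_sum]
    congr 1
    exact Finset.sum_congr rfl fun J _ => by ring
  have hA2 : (∑ J : Fin N, m J * Bf m X J ^ 2)
      = (∑ J : Fin N, ∑ K ∈ Finset.univ.erase J, m J * m K ^ 2 / sq2 X J K)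
        - ((∑ i : Fin N, m i ^ 2) * (∑ i : Fin N, m i) - (∑ i : Fin N, m i ^ 3))
        + ∑ J : Fin N, ∑ K : Fin N, ∑ L : Fin N, Hf m X J K L := by
    rw [Finset.sum_congr rfl fun J _ => hB2 J, Finset.sum_add_distrib, Finset.sum_sub_distrib]
    congr 2
    have h4 : ∀ J : Fin N, m J * ((∑ i : Fin N, m i ^ 2) - m J ^ 2)
        = (∑ i : Fin N, m i ^ 2) * m J - m J ^ 3 := fun J => by ring
    rw [Finset.sum_congr rfl fun J _ => h4 J, Finset.sum_sub_distrib, ← Finset.mul_sum]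
  have hscalar : -(∑ J : Fin N, (lam ^ 2 * m J / 4 * Bf m X J ^ 2 - lam / 4 * SSf m X J))
      + (∑ J : Fin N, ∑ K ∈ Finset.Ioi J,
          lam * (m J + m K) * (lam * m J * m K - 1) * (1 / (4 * sq2 X J K)))
      = lam ^ 2 / 12 * ((∑ J : Fin N, m J) ^ 3 - ∑ J : Fin N, m J ^ 3) := by
    rw [hsplit, hA2]
    linear_combination hcanc + (-(lam ^ 2) / 12) * hT3 + lam ^ 2 / 12 * hM3
  linear_combination (∏ J : Fin N, ∏ K ∈ Finset.Ioi J,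
    Real.sin ((X J - X K) / 2) ^ (lam * m J * m K)) * hscalar
end

section
/- Concrete deformed eigenfunction (N = 1, Ñ = 2, λ = 2): the function Ψ₀(x, u, v) = sin((u−v)/2)^{1/2} / ( sin((x−u)/2)·sin((x−v)/2) ) satisfies −∂²Ψ₀/∂x² + 2∂²Ψ₀/∂u² + 2∂²Ψ₀/∂v² + [V(u−v) − 2V(x−u) − 2V(x−v)]·Ψ₀ = −(1/4)·Ψ₀, where V(r) = 1/(4 sin²(r/2)), on any region where sin((u−v)/2), sin((x−u)/2), sin((x−v)/2) are all positive. -/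
lemma hd_sin_sub (u t : ℝ) : HasDerivAt (fun s => Real.sin ((s - u)/2)) (Real.cos ((t - u)/2) / 2) t := by
  have h : HasDerivAt (fun s : ℝ => (s - u)/2) (1/2) t := by
    simpa using ((hasDerivAt_id t).sub_const u).div_const 2
  have := (Real.hasDerivAt_sin ((t - u)/2)).comp t h
  exact this.congr_deriv (by ring)

lemma hd_sin_rev (x t : ℝ) : HasDerivAt (fun s => Real.sin ((x - s)/2)) (-(Real.cos ((x - t)/2) / 2)) t := by
  have h : HasDerivAt (fun s : ℝ => (x - s)/2) (-(1/2)) t := by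
    have h0 := ((hasDerivAt_id t).const_sub x).div_const 2; exact h0.congr_deriv (by norm_num)
  have := (Real.hasDerivAt_sin ((x - t)/2)).comp t h
  exact this.congr_deriv (by ring)

lemma hd_cos_sub (u t : ℝ) : HasDerivAt (fun s => Real.cos ((s - u)/2)) (-(Real.sin ((t - u)/2) / 2)) t := by
  have h : HasDerivAt (fun s : ℝ => (s - u)/2) (1/2) t := by
    simpa using ((hasDerivAt_id t).sub_const u).div_const 2
  have := (Real.hasDerivAt_cos ((t - u)/2)).comp t h
  exact this.congr_deriv (by ring)

lemma hd_cos_rev (x t : ℝ) : HasDerivAt (fun s => Real.cos ((x - s)/2)) (Real.sin ((x - t)/2) / 2) t := by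
  have h : HasDerivAt (fun s : ℝ => (x - s)/2) (-(1/2)) t := by
    have h0 := ((hasDerivAt_id t).const_sub x).div_const 2; exact h0.congr_deriv (by norm_num)
  have := (Real.hasDerivAt_cos ((x - t)/2)).comp t h
  exact this.congr_deriv (by ring)

open Topology Filter

set_option maxHeartbeats 2000000 in
open Real in
theorem concrete_deformed_eigenfunction
    (V : ℝ → ℝ) (hV : V = fun r => 1 / (4 * Real.sin (r / 2) ^ 2))
    (Ψ₀ : ℝ → ℝ → ℝ → ℝ)
    (hΨ₀ : Ψ₀ = fun x u v => Real.sin ((u - v) / 2) ^ ((1 : ℝ) / 2) /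
        (Real.sin ((x - u) / 2) * Real.sin ((x - v) / 2)))
    (x u v : ℝ)
    (h1 : 0 < Real.sin ((u - v) / 2)) (h2 : 0 < Real.sin ((x - u) / 2))
    (h3 : 0 < Real.sin ((x - v) / 2)) :
    -iteratedDeriv 2 (fun t => Ψ₀ t u v) x
      + 2 * iteratedDeriv 2 (fun t => Ψ₀ x t v) u
      + 2 * iteratedDeriv 2 (fun t => Ψ₀ x u t) v
      + (V (u - v) - 2 * V (x - u) - 2 * V (x - v)) * Ψ₀ x u v
      = -(1 / 4) * Ψ₀ x u v := by
  simp only [hV, hΨ₀]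
  have h2ID : ∀ g : ℝ → ℝ, iteratedDeriv 2 g = deriv (deriv g) := by
    intro g; rw [show (2:ℕ) = 1 + 1 from rfl, iteratedDeriv_succ, iteratedDeriv_one]
  rw [h2ID, h2ID, h2ID]
  -- open positivity neighborhoods
  have o1 : IsOpen {t : ℝ | 0 < Real.sin ((t - u)/2)} :=
    isOpen_lt continuous_const (Real.continuous_sin.comp (by continuity))
  have o2 : IsOpen {t : ℝ | 0 < Real.sin ((t - v)/2)} :=
    isOpen_lt continuous_const (Real.continuous_sin.comp (by continuity))
  have o3 : IsOpen {t : ℝ | 0 < Real.sin ((x - t)/2)} :=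
    isOpen_lt continuous_const (Real.continuous_sin.comp (by continuity))
  have o4 : IsOpen {t : ℝ | 0 < Real.sin ((u - t)/2)} :=
    isOpen_lt continuous_const (Real.continuous_sin.comp (by continuity))
  ---- x-direction
  have heqx : deriv (fun t => Real.sin ((u - v) / 2) ^ ((1:ℝ)/2) /
        (Real.sin ((t - u) / 2) * Real.sin ((t - v) / 2))) =ᶠ[𝓝 x]
      (fun t => (0 * (Real.sin ((t - u)/2) * Real.sin ((t - v)/2))
          - Real.sin ((u - v) / 2) ^ ((1:ℝ)/2) *
            (Real.cos ((t - u)/2)/2 * Real.sin ((t - v)/2)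
              + Real.sin ((t - u)/2) * (Real.cos ((t - v)/2)/2)))
        / (Real.sin ((t - u)/2) * Real.sin ((t - v)/2))^2) := by
    filter_upwards [o1.mem_nhds h2, o2.mem_nhds h3] with t ht1 ht2
    exact (((hasDerivAt_const t (Real.sin ((u - v) / 2) ^ ((1:ℝ)/2))).div
      ((hd_sin_sub u t).mul (hd_sin_sub v t)) (mul_pos ht1 ht2).ne')).deriv
  rw [heqx.deriv_eq]
  have hFx : HasDerivAt (fun t => (0 * (Real.sin ((t - u)/2) * Real.sin ((t - v)/2))
          - Real.sin ((u - v) / 2) ^ ((1:ℝ)/2) *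
            (Real.cos ((t - u)/2)/2 * Real.sin ((t - v)/2)
              + Real.sin ((t - u)/2) * (Real.cos ((t - v)/2)/2)))
        / (Real.sin ((t - u)/2) * Real.sin ((t - v)/2))^2) _ x :=
    (((hasDerivAt_const x (0:ℝ)).mul ((hd_sin_sub u x).mul (hd_sin_sub v x))).sub
      ((hasDerivAt_const x (Real.sin ((u - v) / 2) ^ ((1:ℝ)/2))).mul
        ((((hd_cos_sub u x).div_const 2).mul (hd_sin_sub v x)).add
          ((hd_sin_sub u x).mul ((hd_cos_sub v x).div_const 2))))).div
      (((hd_sin_sub u x).mul (hd_sin_sub v x)).pow 2) (by positivity)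
  rw [hFx.deriv]
  ---- u-direction
  have hequ : deriv (fun t => Real.sin ((t - v) / 2) ^ ((1:ℝ)/2) /
        (Real.sin ((x - t) / 2) * Real.sin ((x - v) / 2))) =ᶠ[𝓝 u]
      (fun t => (Real.cos ((t - v)/2)/2 * ((1:ℝ)/2) * Real.sin ((t - v)/2) ^ ((1:ℝ)/2 - 1) *
            (Real.sin ((x - t)/2) * Real.sin ((x - v)/2))
          - Real.sin ((t - v)/2) ^ ((1:ℝ)/2) * (-(Real.cos ((x - t)/2)/2) * Real.sin ((x - v)/2)))
        / (Real.sin ((x - t)/2) * Real.sin ((x - v)/2))^2) := by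
    filter_upwards [o2.mem_nhds h1, o3.mem_nhds h2] with t ht1 ht2
    exact (((hd_sin_sub v t).rpow_const (Or.inl ht1.ne')).div
      ((hd_sin_rev x t).mul_const (Real.sin ((x - v)/2))) (by positivity)).deriv
  rw [hequ.deriv_eq]
  have hFu : HasDerivAt (fun t => (Real.cos ((t - v)/2)/2 * ((1:ℝ)/2) * Real.sin ((t - v)/2) ^ ((1:ℝ)/2 - 1) *
            (Real.sin ((x - t)/2) * Real.sin ((x - v)/2))
          - Real.sin ((t - v)/2) ^ ((1:ℝ)/2) * (-(Real.cos ((x - t)/2)/2) * Real.sin ((x - v)/2)))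
        / (Real.sin ((x - t)/2) * Real.sin ((x - v)/2))^2) _ u :=
    ((((((hd_cos_sub v u).div_const 2).mul_const ((1:ℝ)/2)).mul
        ((hd_sin_sub v u).rpow_const (Or.inl h1.ne'))).mul
        ((hd_sin_rev x u).mul_const (Real.sin ((x - v)/2)))).sub
      (((hd_sin_sub v u).rpow_const (Or.inl h1.ne')).mul
        ((((hd_cos_rev x u).div_const 2).neg).mul_const (Real.sin ((x - v)/2))))).div
      (((hd_sin_rev x u).mul_const (Real.sin ((x - v)/2))).pow 2) (by positivity)
  rw [hFu.deriv]
  ---- v-direction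
  have heqv : deriv (fun t => Real.sin ((u - t) / 2) ^ ((1:ℝ)/2) /
        (Real.sin ((x - u) / 2) * Real.sin ((x - t) / 2))) =ᶠ[𝓝 v]
      (fun t => (-(Real.cos ((u - t)/2)/2) * ((1:ℝ)/2) * Real.sin ((u - t)/2) ^ ((1:ℝ)/2 - 1) *
            (Real.sin ((x - u)/2) * Real.sin ((x - t)/2))
          - Real.sin ((u - t)/2) ^ ((1:ℝ)/2) * (Real.sin ((x - u)/2) * -(Real.cos ((x - t)/2)/2)))
        / (Real.sin ((x - u)/2) * Real.sin ((x - t)/2))^2) := by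
    filter_upwards [o4.mem_nhds h1, o3.mem_nhds h3] with t ht1 ht2
    exact (((hd_sin_rev u t).rpow_const (Or.inl ht1.ne')).div
      ((hd_sin_rev x t).const_mul (Real.sin ((x - u)/2))) (by positivity)).deriv
  rw [heqv.deriv_eq]
  have hFv : HasDerivAt (fun t => (-(Real.cos ((u - t)/2)/2) * ((1:ℝ)/2) * Real.sin ((u - t)/2) ^ ((1:ℝ)/2 - 1) *
            (Real.sin ((x - u)/2) * Real.sin ((x - t)/2))
          - Real.sin ((u - t)/2) ^ ((1:ℝ)/2) * (Real.sin ((x - u)/2) * -(Real.cos ((x - t)/2)/2)))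
        / (Real.sin ((x - u)/2) * Real.sin ((x - t)/2))^2) _ v :=
    (((((((hd_cos_rev u v).div_const 2).neg).mul_const ((1:ℝ)/2)).mul
        ((hd_sin_rev u v).rpow_const (Or.inl h1.ne'))).mul
        ((hd_sin_rev x v).const_mul (Real.sin ((x - u)/2)))).sub
      (((hd_sin_rev u v).rpow_const (Or.inl h1.ne')).mul
        ((((hd_cos_rev x v).div_const 2).neg).const_mul (Real.sin ((x - u)/2))))).div
      (((hd_sin_rev x v).const_mul (Real.sin ((x - u)/2))).pow 2) (by positivity)
  rw [hFv.deriv]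
  simp only [Pi.mul_apply, Pi.add_apply, Pi.sub_apply, Pi.neg_apply, Nat.cast_ofNat]
  have hr1 : Real.sin ((u - v)/2) ^ ((1:ℝ)/2 - 1)
      = Real.sin ((u - v)/2) ^ ((1:ℝ)/2) / Real.sin ((u - v)/2) := by
    rw [Real.rpow_sub h1, Real.rpow_one]
  have hr2 : Real.sin ((u - v)/2) ^ ((1:ℝ)/2 - 1 - 1)
      = Real.sin ((u - v)/2) ^ ((1:ℝ)/2) / (Real.sin ((u - v)/2) * Real.sin ((u - v)/2)) := by
    rw [Real.rpow_sub h1, Real.rpow_sub h1, Real.rpow_one, div_div]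
  simp only [hr2, hr1]
  set S := Real.sin ((u - v)/2) ^ ((1:ℝ)/2) with hSdef
  set A := Real.sin ((u - v)/2) with hAdef
  set B := Real.sin ((x - u)/2) with hBdef
  set C := Real.sin ((x - v)/2) with hCdef
  set α' := Real.cos ((u - v)/2) with hadef
  set β' := Real.cos ((x - u)/2) with hbdef
  set γ' := Real.cos ((x - v)/2) with hcdef
  have hS2 : S ^ 2 = A := by
    rw [hSdef, ← Real.rpow_natCast (A ^ ((1:ℝ)/2)) 2, ← Real.rpow_mul h1.le]
    norm_num
  have hSpos : 0 < S := Real.rpow_pos_of_pos h1 _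
  have hAid : A = C * β' - B * γ' := by
    rw [hAdef, hBdef, hCdef, hbdef, hcdef,
      show (u - v)/2 = (x - v)/2 - (x - u)/2 by ring, Real.sin_sub]
    ring
  have hCid : α' = γ' * β' + C * B := by
    rw [hadef, hBdef, hCdef, hbdef, hcdef,
      show (u - v)/2 = (x - v)/2 - (x - u)/2 by ring, Real.cos_sub]
  have hB1 : B ^ 2 + β' ^ 2 = 1 := by rw [hBdef, hbdef]; exact Real.sin_sq_add_cos_sq _
  have hC1 : C ^ 2 + γ' ^ 2 = 1 := by rw [hCdef, hcdef]; exact Real.sin_sq_add_cos_sq _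
  field_simp
  rw [hCid, hAid]
  linear_combination ((32:ℝ)*B*C^5*β'^2*S + (-64:ℝ)*B^2*C^4*β'*γ'*S + (24:ℝ)*B^3*C^3*γ'^2*S + (32:ℝ)*C^4*β'^3*γ'*S + (-32:ℝ)*B^2*C^2*β'*γ'^3*S + (16:ℝ)*B^3*C*γ'^4*S + (-8:ℝ)*B^3*C^5*S + (8:ℝ)*B*C^3*S + (-32:ℝ)*C^4*β'*γ'*S + (8:ℝ)*B*C^3*γ'^2*S + (-16:ℝ)*B*C^3*β'^2*S + (32:ℝ)*B^2*C^2*β'*γ'*S + (-16:ℝ)*B^3*C*γ'^2*S + (-32:ℝ)*C^2*β'*γ'^3*S + (32:ℝ)*C^2*β'^3*γ'^3*S + (16:ℝ)*B*C*γ'^4*S + (-16:ℝ)*B*C*β'^2*γ'^4*S + (-8:ℝ)*B*C^5*S + (32:ℝ)*C^2*β'*γ'*S + (-32:ℝ)*C^2*β'^3*γ'*S + (-16:ℝ)*B*C*γ'^2*S + (16:ℝ)*B*C*β'^2*γ'^2*S) * hB1 + ((-16:ℝ)*B*C^3*β'^4*S + (24:ℝ)*B*C^3*β'^2*S + (64:ℝ)*C^2*β'^3*γ'*S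 + (-32:ℝ)*C^2*β'^5*γ'*S + (16:ℝ)*B*C*β'^4*γ'^2*S + (-32:ℝ)*B*C*β'^2*γ'^2*S + (-32:ℝ)*C^2*β'*γ'*S + (16:ℝ)*B*C*γ'^2*S + (-8:ℝ)*B*C^3*S) * hC1
end
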